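/- Generalized disjunctive paraconsistent relations generalize disjunctive paraconsistent relations: for every normalized disjunctive paraconsistent relation S on a scheme Σ with S⁻ finite and nonempty, the generalized disjunctive paraconsistent relation R = ⟨S⁺, {{t} : t ∈ S⁻}⟩ (whose negative component consists of the singletons of the tuples of S⁻) is normalized and has the same information content as S, namely g_rep(R) = {S}. -/

import Mathlib

/-!
Formalization of generalized disjunctive paraconsistent relations.

A scheme is a finite set of attribute names `σ : Finset Attr`; each attribute
`a` has a (nonempty) domain `Val a`.  A tuple on `σ` assigns to each `a ∈ σ`
a value in `Val a`.
-/

variable {Attr : Type*}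

/-- A tuple on scheme `σ`: a map assigning to each attribute `a ∈ σ` a value in `dom a`. -/
def Tuple (Val : Attr → Type*) (σ : Finset Attr) : Type _ :=
  (a : Attr) → a ∈ σ → Val a

variable {Val : Attr → Type*}

/-- Restriction (projection) of a tuple on `σ` to a subscheme `Δ ⊆ σ`. -/
def restrict {Δ σ : Finset Attr} (h : Δ ⊆ σ) (t : Tuple Val σ) : Tuple Val Δ :=
  fun a ha => t a (h ha)

/-- A set is a singleton (has exactly one element), i.e. `|s| = 1`. -/
def IsSingletonSet {α : Type*} (s : Set α) : Prop := ∃ t, s = {t}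

/-- For a collection `U = {u₁, …, u_m}` of sets, the collection of all
"choice sets" `{t₁, …, t_m}` with `tᵢ ∈ uᵢ` for each `i`. -/
def transversals {α : Type*} (U : Set (Set α)) : Set (Set α) :=
  {s | ∃ f : Set α → α, (∀ u ∈ U, f u ∈ u) ∧ s = (fun u => f u) '' U}

/-- A disjunctive paraconsistent relation on scheme `σ`: a pair `⟨S⁺, S⁻⟩` where
`S⁺` is a set of tuple sets and `S⁻` a set of tuples. -/
structure DPR (Val : Attr → Type*) (σ : Finset Attr) where
  pos : Set (Set (Tuple Val σ))
  neg : Set (Tuple Val σ)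

/-- Well-formedness of a disjunctive paraconsistent relation: the positive
component is a finite set of nonempty finite tuple sets. -/
def DPR.WellFormed {σ : Finset Attr} (S : DPR Val σ) : Prop :=
  S.pos.Finite ∧ ∀ w ∈ S.pos, w.Finite ∧ w.Nonempty

/-- A disjunctive paraconsistent relation is normalized if no `w ∈ S⁺` satisfies `w ⊆ S⁻`. -/
def DPR.Normalized {σ : Finset Attr} (S : DPR Val σ) : Prop :=
  ∀ w ∈ S.pos, ¬ w ⊆ S.neg

/-- A generalized disjunctive paraconsistent relation on scheme `σ`: a pair
`⟨R⁺, R⁻⟩` of sets of tuple sets. -/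
structure GDPR (Val : Attr → Type*) (σ : Finset Attr) where
  pos : Set (Set (Tuple Val σ))
  neg : Set (Set (Tuple Val σ))

/-- Well-formedness: both components are finite sets of nonempty finite tuple sets. -/
def GDPR.WellFormed {σ : Finset Attr} (R : GDPR Val σ) : Prop :=
  R.pos.Finite ∧ R.neg.Finite ∧ (∀ w ∈ R.pos, w.Finite ∧ w.Nonempty) ∧
    ∀ u ∈ R.neg, u.Finite ∧ u.Nonempty

/-- `W(R)` : the union of all singleton tuple sets of the positive component. -/
def GDPR.W {σ : Finset Attr} (R : GDPR Val σ) : Set (Tuple Val σ) :=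
  ⋃₀ {w ∈ R.pos | IsSingletonSet w}

/-- `U(R)` : the union of all singleton tuple sets of the negative component. -/
def GDPR.U {σ : Finset Attr} (R : GDPR Val σ) : Set (Tuple Val σ) :=
  ⋃₀ {u ∈ R.neg | IsSingletonSet u}

/-- The normalization operator `g_norm`, removing inconsistencies. -/
def gnorm {σ : Finset Attr} (R : GDPR Val σ) : GDPR Val σ where
  pos := (R.pos \ {w ∈ R.pos | w ⊆ R.U}) \
    {w ∈ R.pos | IsSingletonSet w ∧ ∃ u ∈ R.neg, u ⊆ R.W ∧ w ⊆ u}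
  neg := (R.neg \ {u ∈ R.neg | u ⊆ R.W}) \
    {u ∈ R.neg | IsSingletonSet u ∧ ∃ w ∈ R.pos, w ⊆ R.U ∧ u ⊆ w}

/-- `R` is normalized if it contains no inconsistencies, i.e. `g_norm(R) = R`. -/
def GDPR.Normalized {σ : Finset Attr} (R : GDPR Val σ) : Prop := gnorm R = R

/-- The redundancy-removal operator `g_reduce`. -/
def greduce {σ : Finset Attr} (R : GDPR Val σ) : GDPR Val σ where
  pos := {w' | ∃ w ∈ R.pos, w' = w \ R.U ∧ ¬ ∃ w₁ ∈ R.pos, (w₁ \ R.U) ⊂ w'}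
  neg := {u' | ∃ u ∈ R.neg, u' = u \ R.W ∧ ¬ ∃ u₁ ∈ R.neg, (u₁ \ R.W) ⊂ u'}

/-- The redundancy-removal operator `reduce` on disjunctive paraconsistent relations. -/
def reduce {σ : Finset Attr} (S : DPR Val σ) : DPR Val σ where
  pos := {w' | ∃ w ∈ S.pos, w' = w \ S.neg ∧ ¬ ∃ w₁ ∈ S.pos, (w₁ \ S.neg) ⊂ w'}
  neg := S.neg

/-- `g_normrep` removes all inconsistent disjunctive paraconsistent relations. -/
def gnormrep {σ : Finset Attr} (U : Set (DPR Val σ)) : Set (DPR Val σ) :=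
  U \ {S ∈ U | ∃ w ∈ S.pos, w ⊆ S.neg}

/-- `g_reducerep` keeps only the minimal disjunctive paraconsistent relations. -/
def greducerep {σ : Finset Attr} (U : Set (DPR Val σ)) : Set (DPR Val σ) :=
  {S ∈ U | ¬ ∃ S' ∈ U, S' ≠ S ∧ S'.pos ⊆ S.pos ∧ S'.neg ⊆ S.neg}

/-- The information content `g_rep` of a (normalized) generalized disjunctive
paraconsistent relation: all disjunctive paraconsistent relations obtained by
choosing one tuple from each negative tuple set, after removing inconsistent
and non-minimal ones. -/
def grep {σ : Finset Attr} (R : GDPR Val σ) : Set (DPR Val σ) :=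
  greducerep (gnormrep
    {S : DPR Val σ | S.pos = R.pos ∧ S.neg ∈ transversals R.neg})

/-- Union `∪̂` on disjunctive paraconsistent relations. -/
def dUnion {σ : Finset Attr} (R S : DPR Val σ) : DPR Val σ :=
  reduce ⟨(reduce R).pos ∪ (reduce S).pos, (reduce R).neg ∩ (reduce S).neg⟩

/-- Intersection `∩̂` on disjunctive paraconsistent relations. -/
def dInter {σ : Finset Attr} (R S : DPR Val σ) : DPR Val σ :=
  reduce ⟨transversals {a | ∃ E ∈ transversals (reduce R).pos,
      ∃ F ∈ transversals (reduce S).pos, a = E ∩ F},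
    R.neg ∪ S.neg⟩

/-- Selection `σ̂_F` on disjunctive paraconsistent relations, where the
selection formula `F` is modelled as a predicate on tuples. -/
def dSelect {σ : Finset Attr} (F : Tuple Val σ → Prop) (S : DPR Val σ) : DPR Val σ :=
  reduce ⟨{w ∈ (reduce S).pos | ∀ t ∈ w, F t}, (reduce S).neg ∪ {t | ¬ F t}⟩

/-- `t^σ` : the set of all extensions to scheme `σ` of a tuple `t` on `Δ ⊆ σ`. -/
def tupleExt {Δ σ : Finset Attr} (h : Δ ⊆ σ) (t : Tuple Val Δ) : Set (Tuple Val σ) :=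
  {t' | restrict h t' = t}

/-- `T^σ` : the set of all extensions to scheme `σ` of tuples of `T ⊆ τ(Δ)`. -/
def setExt {Δ σ : Finset Attr} (h : Δ ⊆ σ) (T : Set (Tuple Val Δ)) : Set (Tuple Val σ) :=
  {t' | restrict h t' ∈ T}

/-- Projection `π̂_Δ` on disjunctive paraconsistent relations. -/
def dProj {Δ σ : Finset Attr} (h : Δ ⊆ σ) (S : DPR Val σ) : DPR Val Δ :=
  reduce ⟨{w' | ∃ w ∈ (reduce S).pos, w' = restrict h '' w},
    {t | tupleExt h t ⊆ (reduce S).neg}⟩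

/-- Natural join `V ⋈ W` of tuple sets on schemes `σ₁` and `σ₂`. -/
def tjoin [DecidableEq Attr] {σ₁ σ₂ : Finset Attr}
    (V : Set (Tuple Val σ₁)) (W : Set (Tuple Val σ₂)) :
    Set (Tuple Val (σ₁ ∪ σ₂)) :=
  {t | restrict Finset.subset_union_left t ∈ V ∧
       restrict Finset.subset_union_right t ∈ W}

/-- Natural join `⋈̂` on disjunctive paraconsistent relations. -/
def dJoin [DecidableEq Attr] {σ₁ σ₂ : Finset Attr}
    (R : DPR Val σ₁) (S : DPR Val σ₂) : DPR Val (σ₁ ∪ σ₂) :=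
  reduce ⟨transversals {a | ∃ E ∈ transversals (reduce R).pos,
      ∃ F ∈ transversals (reduce S).pos, a = tjoin E F},
    setExt Finset.subset_union_left (reduce R).neg ∪
      setExt Finset.subset_union_right (reduce S).neg⟩

/-- Union `∪̄` on generalized disjunctive paraconsistent relations. -/
def gUnion {σ : Finset Attr} (R S : GDPR Val σ) : GDPR Val σ :=
  greduce ⟨(greduce R).pos ∪ (greduce S).pos,
    transversals {a | ∃ E ∈ transversals (greduce R).neg,
      ∃ F ∈ transversals (greduce S).neg, a = E ∩ F}⟩

/-- Intersection `∩̄` on generalized disjunctive paraconsistent relations. -/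
def gInter {σ : Finset Attr} (R S : GDPR Val σ) : GDPR Val σ :=
  greduce ⟨transversals {a | ∃ E ∈ transversals (greduce R).pos,
      ∃ F ∈ transversals (greduce S).pos, a = E ∩ F},
    (greduce R).neg ∪ (greduce S).neg⟩

/-- Selection `σ̄_F` on generalized disjunctive paraconsistent relations. -/
def gSelect {σ : Finset Attr} (F : Tuple Val σ → Prop) (R : GDPR Val σ) : GDPR Val σ :=
  greduce ⟨{w ∈ (greduce R).pos | ∀ t ∈ w, F t},
    R.neg ∪ {u | ∃ t, ¬ F t ∧ u = {t}}⟩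

/-- Projection `π̄_Δ` on generalized disjunctive paraconsistent relations. -/
def gProj {Δ σ : Finset Attr} (h : Δ ⊆ σ) (R : GDPR Val σ) : GDPR Val Δ :=
  greduce ⟨{w' | ∃ w ∈ (greduce R).pos, w' = restrict h '' w},
    transversals {a | (∃ E ∈ transversals (greduce R).neg,
        a = {t | tupleExt h t ⊆ E}) ∧ a.Nonempty}⟩

/-- Natural join `⋈̄` on generalized disjunctive paraconsistent relations. -/
def gJoin [DecidableEq Attr] {σ₁ σ₂ : Finset Attr}
    (R : GDPR Val σ₁) (S : GDPR Val σ₂) : GDPR Val (σ₁ ∪ σ₂) :=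
  greduce ⟨transversals {a | ∃ E ∈ transversals (greduce R).pos,
      ∃ F ∈ transversals (greduce S).pos, a = tjoin E F},
    transversals {b | ∃ G ∈ transversals (greduce R).neg,
      ∃ H ∈ transversals (greduce S).neg,
      b = setExt Finset.subset_union_left G ∪
          setExt Finset.subset_union_right H}⟩

/-- generalized disjunctive paraconsistent relations generalize
disjunctive paraconsistent relations: for every normalized disjunctive
paraconsistent relation `S` with finite nonempty negative component, the
generalized relation `⟨S⁺, {{t} : t ∈ S⁻}⟩` is normalized and has information
content exactly `{S}`. -/
theorem gdpr_generalizes_dpr {σ : Finset Attr} [∀ a, Nonempty (Val a)]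
    (S : DPR Val σ) (hwf : S.WellFormed) (hn : S.Normalized)
    (hfin : S.neg.Finite) (hne : S.neg.Nonempty) :
    (GDPR.mk S.pos {u | ∃ t ∈ S.neg, u = {t}} : GDPR Val σ).WellFormed ∧
    (GDPR.mk S.pos {u | ∃ t ∈ S.neg, u = {t}} : GDPR Val σ).Normalized ∧
    grep (GDPR.mk S.pos {u | ∃ t ∈ S.neg, u = {t}} : GDPR Val σ) = {S} := by
  classical
  haveI : Nonempty (Tuple Val σ) := ⟨fun a _ => Classical.arbitrary _⟩
  set R : GDPR Val σ := GDPR.mk S.pos {u | ∃ t ∈ S.neg, u = {t}} with hR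
  have hmemneg : ∀ u, u ∈ R.neg ↔ ∃ t ∈ S.neg, u = {t} := fun u => Iff.rfl
  have hU : R.U = S.neg := by
    ext t
    constructor
    · rintro ⟨u, ⟨hu, -⟩, htu⟩
      obtain ⟨t', ht', rfl⟩ := (hmemneg u).1 hu
      simp only [Set.mem_singleton_iff] at htu
      exact htu ▸ ht'
    · intro ht
      exact ⟨{t}, ⟨(hmemneg _).2 ⟨t, ht, rfl⟩, ⟨t, rfl⟩⟩, rfl⟩
  -- well-formedness
  have hwfR : R.WellFormed := by
    refine ⟨hwf.1, ?_, hwf.2, ?_⟩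
    · have : R.neg = (fun t => ({t} : Set (Tuple Val σ))) '' S.neg := by
        ext u
        simp only [Set.mem_image]
        rw [hmemneg]
        constructor
        · rintro ⟨t, ht, rfl⟩; exact ⟨t, ht, rfl⟩
        · rintro ⟨t, ht, rfl⟩; exact ⟨t, ht, rfl⟩
      rw [this]; exact hfin.image _
    · rintro u hu
      obtain ⟨t, ht, rfl⟩ := (hmemneg u).1 hu
      exact ⟨Set.finite_singleton t, ⟨t, rfl⟩⟩
  -- normalization
  have hnorm : R.Normalized := by
    show gnorm R = R
    have hpos : (gnorm R).pos = R.pos := by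
      show (R.pos \ _) \ _ = R.pos
      have e1 : {w | w ∈ R.pos ∧ w ⊆ R.U} = ∅ := by
        rw [Set.eq_empty_iff_forall_notMem]
        rintro w ⟨hw, hws⟩
        rw [hU] at hws
        exact hn w hw hws
      have e2 : {w | w ∈ R.pos ∧ IsSingletonSet w ∧ ∃ u ∈ R.neg, u ⊆ R.W ∧ w ⊆ u} = ∅ := by
        rw [Set.eq_empty_iff_forall_notMem]
        rintro w ⟨hw, -, u, hu, -, hwu⟩
        obtain ⟨t, ht, rfl⟩ := (hmemneg u).1 hu
        obtain ⟨t', ht'⟩ := (hwf.2 w hw).2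
        have : w = {t} := by
          apply Set.eq_singleton_iff_nonempty_unique_mem.2
          exact ⟨⟨t', ht'⟩, fun x hx => hwu hx⟩
        apply hn w hw
        rw [this]
        simpa using ht
      rw [e1, e2, Set.diff_empty, Set.diff_empty]
    have hneg : (gnorm R).neg = R.neg := by
      show (R.neg \ _) \ _ = R.neg
      have e1 : {u | u ∈ R.neg ∧ u ⊆ R.W} = ∅ := by
        rw [Set.eq_empty_iff_forall_notMem]
        rintro u ⟨hu, hus⟩
        obtain ⟨t, ht, rfl⟩ := (hmemneg u).1 hu
        obtain ⟨w, ⟨hw, hws⟩, htw⟩ := hus rfl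
        obtain ⟨t', rfl⟩ := hws
        simp only [Set.mem_singleton_iff] at htw
        subst htw
        apply hn _ hw
        simpa using ht
      have e2 : {u | u ∈ R.neg ∧ IsSingletonSet u ∧ ∃ w ∈ R.pos, w ⊆ R.U ∧ u ⊆ w} = ∅ := by
        rw [Set.eq_empty_iff_forall_notMem]
        rintro u ⟨hu, -, w, hw, hws, -⟩
        rw [hU] at hws
        exact hn w hw hws
      rw [e1, e2, Set.diff_empty, Set.diff_empty]
    calc gnorm R = ⟨(gnorm R).pos, (gnorm R).neg⟩ := rfl
      _ = ⟨R.pos, R.neg⟩ := by rw [hpos, hneg]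
      _ = R := rfl
  refine ⟨hwfR, hnorm, ?_⟩
  -- transversals of R.neg are exactly {S.neg}
  have htrans : transversals R.neg = {S.neg} := by
    ext s
    constructor
    · rintro ⟨f, hf, rfl⟩
      simp only [Set.mem_singleton_iff]
      ext t
      constructor
      · rintro ⟨u, hu, rfl⟩
        obtain ⟨t', ht', rfl⟩ := (hmemneg u).1 hu
        have := hf _ ((hmemneg _).2 ⟨t', ht', rfl⟩)
        simp only [Set.mem_singleton_iff] at this
        simpa [this] using ht'
      · intro ht
        have hu : ({t} : Set (Tuple Val σ)) ∈ R.neg := (hmemneg _).2 ⟨t, ht, rfl⟩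
        have := hf _ hu
        simp only [Set.mem_singleton_iff] at this
        exact ⟨{t}, hu, this⟩
    · rintro rfl
      refine ⟨fun u => if h : u.Nonempty then h.choose else Classical.arbitrary _, ?_, ?_⟩
      · intro u hu
        obtain ⟨t, ht, rfl⟩ := (hmemneg u).1 hu
        have h : ({t} : Set (Tuple Val σ)).Nonempty := ⟨t, rfl⟩
        simp only [dif_pos h]
        exact h.choose_spec
      · ext t
        constructor
        · intro ht
          refine ⟨{t}, (hmemneg _).2 ⟨t, ht, rfl⟩, ?_⟩
          have h : ({t} : Set (Tuple Val σ)).Nonempty := ⟨t, rfl⟩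
          simp only [dif_pos h]
          have := h.choose_spec
          simp only [Set.mem_singleton_iff] at this
          exact this
        · rintro ⟨u, hu, rfl⟩
          obtain ⟨t', ht', rfl⟩ := (hmemneg u).1 hu
          have h : ({t'} : Set (Tuple Val σ)).Nonempty := ⟨t', rfl⟩
          simp only [dif_pos h]
          have := h.choose_spec
          simp only [Set.mem_singleton_iff] at this
          exact this.symm ▸ ht'
  -- the candidate set is {S}
  have hcand : {S' : DPR Val σ | S'.pos = R.pos ∧ S'.neg ∈ transversals R.neg} = {S} := by
    ext S'
    rw [htrans]
    simp only [Set.mem_setOf_eq, Set.mem_singleton_iff]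
    constructor
    · rintro ⟨hp, hn'⟩
      obtain ⟨p, n⟩ := S'
      simp only at hp hn'
      simp [hp, hn']
      rfl
    · rintro rfl
      exact ⟨rfl, rfl⟩
  show greducerep (gnormrep _) = {S}
  rw [hcand]
  have hgn : gnormrep ({S} : Set (DPR Val σ)) = {S} := by
    unfold gnormrep
    have e : {S' | S' ∈ ({S} : Set (DPR Val σ)) ∧ ∃ w ∈ S'.pos, w ⊆ S'.neg} = ∅ := by
      rw [Set.eq_empty_iff_forall_notMem]
      rintro S' ⟨hS', w, hw, hws⟩
      simp only [Set.mem_singleton_iff] at hS'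
      subst hS'
      exact hn w hw hws
    rw [e, Set.diff_empty]
  rw [hgn]
  unfold greducerep
  ext S'
  simp only [Set.mem_setOf_eq, Set.mem_singleton_iff]
  constructor
  · rintro ⟨h, -⟩; exact h
  · rintro rfl
    refine ⟨rfl, ?_⟩
    rintro ⟨S'', hS'', hne'', -⟩
    exact hne'' hS''
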